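/- arXiv:1205.6096 — 6 statements merged into one kernel-verified Lean document; each statement's English description precedes it below -/
import Mathlib

section
/- Let V be a finite-dimensional vector space over a field of characteristic zero. Let b be a unimodular Lie bracket on V (i.e., tr(ad_b u) = 0 for all u), and let b′ be the modular bracket b′(u,v) = θ(u)Av − θ(v)Au where θ ∈ V*, A ∈ End(V), θ ∘ A = 0, and tr(A) ≠ 0. If b and b′ are compatible (b + b′ satisfies Jacobi), then θ(b(u,v)) = 0 for all u, v ∈ V. -/
/-- If a unimodular Lie bracket b is compatible with the modular bracket
B(u,v) = θ(u)Av − θ(v)Au with θ∘A = 0 and tr(A) ≠ 0, then θ vanishes on the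
derived algebra of b. -/
theorem stmt6 {k V : Type*} [Field k] [CharZero k] [AddCommGroup V] [Module k V]
    [FiniteDimensional k V]
    (b : V →ₗ[k] V →ₗ[k] V)
    (halt : ∀ x, b x x = 0)
    (hjac : ∀ x y z, b (b x y) z + b (b y z) x + b (b z x) y = 0)
    (huni : ∀ u, LinearMap.trace k V (b u) = 0)
    (θ : V →ₗ[k] k) (A : V →ₗ[k] V) (hθA : ∀ v, θ (A v) = 0)
    (htrA : LinearMap.trace k V A ≠ 0)
    (B : V →ₗ[k] V →ₗ[k] V) (hB : ∀ u v, B u v = θ u • A v - θ v • A u)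
    (hcompat : ∀ x y z, (b + B) ((b + B) x y) z + (b + B) ((b + B) y z) x +
        (b + B) ((b + B) z x) y = 0) :
    ∀ u v, θ (b u v) = 0 := by
  set c : V →ₗ[k] V →ₗ[k] V := b + B with hc
  -- c is alternating
  have hcalt : ∀ x, c x x = 0 := by
    intro x
    simp [hc, halt x, hB x x]
  -- c is skew
  have hskew : ∀ x y, c x y = - c y x := by
    intro x y
    have h := hcalt (x + y)
    simp only [map_add, LinearMap.add_apply, hcalt] at h
    rw [eq_neg_iff_add_eq_zero]
    linear_combination (norm := module) h
  -- B u as a linear map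
  have hBu : ∀ u : V, B u = θ u • A - (LinearMap.smulRight θ (A u)) := by
    intro u
    ext v
    simp [hB u v, mul_comm]
  -- trace of smulRight θ x = θ x
  have htr_smul : ∀ x : V, LinearMap.trace k V (LinearMap.smulRight θ x) = θ x := by
    intro x
    have : LinearMap.smulRight θ x = dualTensorHom k V V (θ ⊗ₜ x) := by
      ext v; simp
    rw [this, LinearMap.trace_eq_contract_apply]
    simp
  -- trace of c u
  have htrc : ∀ u : V, LinearMap.trace k V (c u) =
      LinearMap.trace k V A * θ u := by
    intro u
    have : c u = b u + (θ u • A - LinearMap.smulRight θ (A u)) := by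
      rw [← hBu u]; rfl
    rw [this, map_add, huni u, map_sub, map_smul, htr_smul, hθA, zero_add, sub_zero,
      smul_eq_mul, mul_comm]
  -- ad_c of a bracket is a commutator
  have hcomm : ∀ x y : V, c (c x y) = c x ∘ₗ c y - c y ∘ₗ c x := by
    intro x y
    ext z
    have h := hcompat x y z
    have h1 : c (c y z) x = - c x (c y z) := by rw [hskew]
    have h2 : c (c z x) y = - c y (c z x) := by rw [hskew]
    have h3 : c z x = - c x z := hskew z x
    simp only [LinearMap.sub_apply, LinearMap.comp_apply]
    have h4 : c y (c z x) = - c y (c x z) := by rw [h3, map_neg]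
    linear_combination (norm := module) h - h1 - h2 + h4
  -- trace of c (c x y) is zero
  have htrzero : ∀ x y : V, LinearMap.trace k V (c (c x y)) = 0 := by
    intro x y
    rw [hcomm x y, map_sub]
    rw [LinearMap.trace_comp_comm']
    exact sub_self _
  -- hence θ (c x y) = 0
  have hθc : ∀ x y : V, θ (c x y) = 0 := by
    intro x y
    have h := htrc (c x y)
    rw [htrzero x y] at h
    exact (mul_eq_zero.mp h.symm).resolve_left htrA
  intro u v
  have h := hθc u v
  simp only [hc, LinearMap.add_apply, map_add, hB u v, map_sub, map_smul, hθA,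
    smul_eq_mul, mul_zero, sub_zero, add_zero] at h
  exact h
end

section
/- Let V be a finite-dimensional vector space over a field of characteristic zero and let b be a perfect Lie bracket on V, i.e., the span of {b(u,v) : u,v ∈ V} is all of V. Let θ ∈ V* be nonzero and A ∈ End(V) with θ ∘ A = 0 and tr(A) ≠ 0, and let b′(u,v) = θ(u)Av − θ(v)Au be the associated modular bracket. Then b and b′ are not compatible: b + b′ does not satisfy the Jacobi identity. -/
open LinearMap

section
variable {k V : Type*} [Field k] [AddCommGroup V] [Module k V] [FiniteDimensional k V]

lemma aux_trace_smulRight (θ : V →ₗ[k] k) (v : V) :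
    trace k V (θ.smulRight v) = θ v := by
  have h : θ.smulRight v = dualTensorHom k V V (θ ⊗ₜ v) := by ext z; simp
  rw [h, trace_eq_contract_apply, contractLeft_apply]
end

/-- A perfect Lie bracket is incompatible with any nonzero modular bracket
B(u,v) = θ(u)Av − θ(v)Au with θ ≠ 0, θ∘A = 0 and tr(A) ≠ 0. -/
theorem stmt7 {k V : Type*} [Field k] [CharZero k] [AddCommGroup V] [Module k V]
    [FiniteDimensional k V]
    (b : V →ₗ[k] V →ₗ[k] V)
    (halt : ∀ x, b x x = 0)
    (hjac : ∀ x y z, b (b x y) z + b (b y z) x + b (b z x) y = 0)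
    (hperf : Submodule.span k {x : V | ∃ u v : V, b u v = x} = ⊤)
    (θ : V →ₗ[k] k) (hθ : θ ≠ 0)
    (A : V →ₗ[k] V) (hθA : ∀ v, θ (A v) = 0)
    (htrA : LinearMap.trace k V A ≠ 0)
    (B : V →ₗ[k] V →ₗ[k] V) (hB : ∀ u v, B u v = θ u • A v - θ v • A u) :
    ¬ (∀ x y z, (b + B) ((b + B) x y) z + (b + B) ((b + B) y z) x +
        (b + B) ((b + B) z x) y = 0) := by
  intro h
  -- antisymmetry
  have hanti : ∀ u v, b u v = - b v u := by
    intro u v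
    have h1 := halt (u + v)
    simp [map_add, halt] at h1
    linear_combination (norm := abel) h1
  -- ad(b u v) = ad u ∘ ad v - ad v ∘ ad u
  have hadj : ∀ u v, b (b u v) = b u ∘ₗ b v - b v ∘ₗ b u := by
    intro u v
    ext z
    have h1 := hjac u v z
    have h2 : b (b v z) u = - b u (b v z) := by rw [hanti]
    have h3 : b (b z u) v = b v (b u z) := by
      rw [hanti z u, map_neg]
      simp only [LinearMap.neg_apply]
      rw [hanti (b u z) v]; simp
    simp only [comp_apply, LinearMap.sub_apply]
    rw [h2, h3] at h1
    linear_combination (norm := abel) h1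
  -- trace of ad w vanishes
  have htrb : ∀ w, trace k V (b w) = 0 := by
    have hker : (⊤ : Submodule k V) ≤ ker ((trace k V) ∘ₗ b) := by
      rw [← hperf]
      rw [Submodule.span_le]
      rintro _ ⟨u, v, rfl⟩
      simp only [SetLike.mem_coe, mem_ker, comp_apply]
      rw [hadj, map_sub, trace_comp_comm' (b u) (b v)]
      ring
    intro w
    have := hker (Submodule.mem_top (x := w))
    simpa using this
  set C := b + B with hCdef
  have hC : ∀ u, C u = b u + θ u • A - θ.smulRight (A u) := by
    intro u; ext z
    simp only [hCdef, LinearMap.add_apply, LinearMap.sub_apply, LinearMap.smul_apply, smulRight_apply, hB u z]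
    abel
  have hCf : ∀ u, C.flip u = -(b u) - θ u • A + θ.smulRight (A u) := by
    intro u; ext z
    simp [hCdef, hB z u, hanti z u]
    abel
  -- θ kills b
  have key : ∀ x y, θ (b x y) = 0 := by
    intro x y
    set G : V →ₗ[k] V :=
      C (C x y) + (C.flip x) ∘ₗ (C y) + (C.flip y) ∘ₗ (C.flip x) with hGdef
    have hG0 : G = 0 := by
      ext z
      simpa [hGdef, comp_apply, flip_apply] using h x y z
    have htrG : trace k V G = 0 := by rw [hG0, map_zero]
    -- compute trace of G
    have hθB : θ (B x y) = 0 := by simp [hB, hθA]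
    -- first term
    have ht1 : trace k V (C (C x y)) = θ (b x y) * trace k V A := by
      rw [hC (C x y), map_sub, map_add, htrb, aux_trace_smulRight, hθA,
        map_smul]
      have : θ (C x y) = θ (b x y) := by
        simp [hCdef, hθB]
      simp [this, smul_eq_mul]
    -- the two composition terms
    have ht2 : trace k V ((C.flip x) ∘ₗ (C y)) +
        trace k V ((C.flip y) ∘ₗ (C.flip x)) = 0 := by
      rw [hCf x, hCf y, hC y]
      simp only [add_comp, sub_comp, neg_comp, comp_add, comp_sub, comp_neg,
        comp_smul, smul_comp, map_add, map_sub, map_neg, map_smul]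
      have e1 : ∀ (f : V →ₗ[k] V) (v : V), f ∘ₗ θ.smulRight v = θ.smulRight (f v) := by
        intro f v; ext z; simp
      have e2 : ∀ (f : V →ₗ[k] V) (v : V), θ.smulRight v ∘ₗ f = (θ ∘ₗ f).smulRight v := by
        intro f v; ext z; simp
      have e3 : ∀ (φ : V →ₗ[k] k) (v : V), trace k V (φ.smulRight v) = φ v := by
        intro φ v
        exact aux_trace_smulRight φ v
      simp only [e1, e2, e3, comp_apply]
      rw [trace_comp_comm' (b x) (b y), trace_comp_comm' (b x) A,
        trace_comp_comm' (b y) A, trace_comp_comm' A A]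
      simp [hθA, smul_eq_mul]
      ring
    have : θ (b x y) * trace k V A = 0 := by
      have h5 := htrG
      rw [hGdef, map_add, map_add] at h5
      linear_combination h5 - ht2 - ht1
    rcases mul_eq_zero.mp this with h' | h'
    · exact h'
    · exact absurd h' htrA
  -- θ = 0, contradiction
  apply hθ
  have hker : (⊤ : Submodule k V) ≤ ker θ := by
    rw [← hperf, Submodule.span_le]
    rintro _ ⟨u, v, rfl⟩
    simpa using key u v
  ext v
  simpa using hker (Submodule.mem_top (x := v))
end

section
/- Let g be a Lie algebra whose underlying space decomposes as V = S ⊕ W with [S,S] ⊆ S, [S,W] ⊆ W, and [W,W] ⊆ S (a d-pair). Define brackets b₁ and b₂ on V by: b₁ agrees with the bracket of g on S×S, S×W and W×S, and vanishes on W×W; b₂ agrees with the bracket of g on W×W and vanishes on S×S, S×W, W×S. Then b₁ and b₂ are both Lie brackets, they are compatible, and b₁ + b₂ is the bracket of g. -/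
/-- The Stripping Lemma: if g = S ⊕ W with [S,S]⊆S, [S,W]⊆W, [W,W]⊆S, then
the semidirect bracket b₁ and the dressing bracket b₂ are Lie brackets,
compatible, and b₁ + b₂ equals the bracket of g. -/
theorem stmt11 {R S W : Type*} [CommRing R] [AddCommGroup S] [Module R S]
    [AddCommGroup W] [Module R W]
    (bS : S →ₗ[R] S →ₗ[R] S) (act : S →ₗ[R] W →ₗ[R] W) (β : W →ₗ[R] W →ₗ[R] S)
    (B : S × W → S × W → S × W)
    (hB : ∀ p q, B p q = (bS p.1 q.1 + β p.2 q.2, act p.1 q.2 - act q.1 p.2))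
    (haltB : ∀ p, B p p = 0)
    (hjacB : ∀ p q r, B (B p q) r + B (B q r) p + B (B r p) q = 0)
    (b₁ b₂ : S × W → S × W → S × W)
    (hb₁ : ∀ p q, b₁ p q = (bS p.1 q.1, act p.1 q.2 - act q.1 p.2))
    (hb₂ : ∀ p q, b₂ p q = (β p.2 q.2, 0)) :
    ((∀ p, b₁ p p = 0) ∧
      ∀ p q r, b₁ (b₁ p q) r + b₁ (b₁ q r) p + b₁ (b₁ r p) q = 0) ∧
    ((∀ p, b₂ p p = 0) ∧
      ∀ p q r, b₂ (b₂ p q) r + b₂ (b₂ q r) p + b₂ (b₂ r p) q = 0) ∧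
    (∀ p q r, (b₁ (b₁ p q + b₂ p q) r + b₂ (b₁ p q + b₂ p q) r) +
        (b₁ (b₁ q r + b₂ q r) p + b₂ (b₁ q r + b₂ q r) p) +
        (b₁ (b₁ r p + b₂ r p) q + b₂ (b₁ r p + b₂ r p) q) = 0) ∧
    (∀ p q, b₁ p q + b₂ p q = B p q) := by
  have hbS0 : ∀ x : S, bS x x = 0 := by
    intro x
    have h := haltB (x, (0 : W))
    rw [hB] at h
    simpa using congrArg Prod.fst h
  have hsum : ∀ p q, b₁ p q + b₂ p q = B p q := by
    intro p q
    rw [hb₁, hb₂, hB, Prod.mk_add_mk]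
    simp
  have hjbS : ∀ x y z : S, bS (bS x y) z + bS (bS y z) x + bS (bS z x) y = 0 := by
    intro x y z
    have h := hjacB (x, (0 : W)) (y, 0) (z, 0)
    simp only [hB] at h
    have := congrArg Prod.fst h
    simpa using this
  have H : ∀ (x y : S) (w : W), act (bS x y) w = act x (act y w) - act y (act x w) := by
    intro x y w
    have h := hjacB (x, (0 : W)) (y, 0) ((0 : S), w)
    simp only [hB] at h
    have := congrArg Prod.snd h
    simp at this
    rw [eq_sub_iff_add_eq, ← sub_eq_zero]
    rw [← sub_eq_zero] at this
    rw [← this]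
    abel
  refine ⟨⟨?_, ?_⟩, ⟨?_, ?_⟩, ?_, hsum⟩
  · intro p
    rw [hb₁]
    simp [hbS0]
  · intro p q r
    simp only [hb₁]
    refine Prod.ext ?_ ?_
    · simpa using hjbS p.1 q.1 r.1
    · simp only [Prod.snd_add, Prod.snd_zero, map_sub, H]
      abel
  · intro p
    rw [hb₂]
    have h := haltB ((0 : S), p.2)
    rw [hB] at h
    have := congrArg Prod.fst h
    simp at this
    simp [this]
  · intro p q r
    simp only [hb₂]
    simp
  · intro p q r
    simp only [hsum]
    exact hjacB p q r
end

section
/- Let g be a Lie algebra with a d-pair decomposition g = S ⊕ W ([S,S]⊆S, [S,W]⊆W, [W,W]⊆S), let ρ : g → End(V) be an irreducible representation on a finite-dimensional vector space V over a field k, and let A ∈ End(V) be nonzero with ρ(s)A = Aρ(s) for all s ∈ S and ρ(w)A = −Aρ(w) for all w ∈ W. If A has an eigenvalue λ ∈ k, then λ ≠ 0 and V = ker(A² − λ²·id). -/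
attribute [local instance 100] LieRing.ofAssociativeRing

/-- For an irreducible representation ρ of a Lie algebra with a d-pair (S,W)
and a nonzero splitting operator A, any eigenvalue λ ∈ k of A is nonzero and
V = ker(A² − λ²·id). -/
theorem stmt14 {k L V : Type*} [Field k] [LieRing L] [LieAlgebra k L]
    [AddCommGroup V] [Module k V] [FiniteDimensional k V]
    (S : LieSubalgebra k L) (W : Submodule k L)
    (hcompl : IsCompl S.toSubmodule W)
    (hSW : ∀ s ∈ S, ∀ w ∈ W, ⁅s, w⁆ ∈ W)
    (hWW : ∀ w ∈ W, ∀ w' ∈ W, ⁅w, w'⁆ ∈ S)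
    (ρ : L →ₗ⁅k⁆ Module.End k V)
    (hirr : ∀ U : Submodule k V, (∀ x : L, ∀ v ∈ U, ρ x v ∈ U) → U = ⊥ ∨ U = ⊤)
    (A : Module.End k V) (hA : A ≠ 0)
    (hcomm : ∀ s ∈ S, ρ s * A = A * ρ s)
    (hanti : ∀ w ∈ W, ρ w * A = -(A * ρ w))
    (c : k) (v : V) (hv : v ≠ 0) (hAv : A v = c • v) :
    c ≠ 0 ∧ ∀ u : V, (A * A) u = (c * c) • u := by
  have hdecomp : ∀ x : L, ∃ s ∈ S, ∃ w ∈ W, x = s + w := by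
    intro x
    have hx : x ∈ S.toSubmodule ⊔ W := by rw [hcompl.sup_eq_top]; trivial
    obtain ⟨s, hs, w, hw, h⟩ := Submodule.mem_sup.mp hx
    exact ⟨s, hs, w, hw, h.symm⟩
  have hcomm2 : ∀ x : L, ρ x * (A * A) = (A * A) * ρ x := by
    intro x
    obtain ⟨s, hs, w, hw, rfl⟩ := hdecomp x
    have h1 := hcomm s hs
    have h2 := hanti w hw
    rw [map_add ρ, add_mul]
    have e1 : ρ s * (A * A) = A * A * ρ s := by
      rw [← mul_assoc, h1, mul_assoc, h1, mul_assoc]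
    have e2 : ρ w * (A * A) = A * A * ρ w := by
      rw [← mul_assoc, h2, neg_mul, mul_assoc, h2, mul_neg, neg_neg, mul_assoc]
    rw [e1, e2, mul_add]
  constructor
  · intro hc
    subst hc
    have hker : ∀ x : L, ∀ u ∈ LinearMap.ker A, ρ x u ∈ LinearMap.ker A := by
      intro x u hu
      obtain ⟨s, hs, w, hw, rfl⟩ := hdecomp x
      rw [LinearMap.mem_ker] at hu ⊢
      rw [map_add ρ, LinearMap.add_apply, map_add]
      have h1 : A (ρ s u) = ρ s (A u) := by
        have := LinearMap.congr_fun (hcomm s hs) u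
        simpa [Module.End.mul_apply] using this.symm
      have h2 : A (ρ w u) = -ρ w (A u) := by
        have := LinearMap.congr_fun (hanti w hw) u
        simp only [Module.End.mul_apply, LinearMap.neg_apply] at this
        rw [this, neg_neg]
      rw [h1, h2, hu]
      simp
    rcases hirr (LinearMap.ker A) hker with h | h
    · have hvmem : v ∈ LinearMap.ker A := by
        rw [LinearMap.mem_ker, hAv, zero_smul]
      rw [h] at hvmem
      exact hv (by simpa using hvmem)
    · apply hA
      ext u
      have : u ∈ LinearMap.ker A := h ▸ Submodule.mem_top
      simpa using this
  · set B := A * A - (c * c) • (1 : Module.End k V) with hB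
    have hBcomm : ∀ x : L, B * ρ x = ρ x * B := by
      intro x
      simp only [hB, sub_mul, mul_sub, hcomm2 x]
      congr 1
      rw [smul_mul_assoc, one_mul, mul_smul_comm, mul_one]
    have hU : ∀ x : L, ∀ u ∈ LinearMap.ker B, ρ x u ∈ LinearMap.ker B := by
      intro x u hu
      rw [LinearMap.mem_ker] at hu ⊢
      calc B (ρ x u) = (B * ρ x) u := rfl
        _ = (ρ x * B) u := by rw [hBcomm x]
        _ = ρ x (B u) := rfl
        _ = 0 := by rw [hu, map_zero]
    rcases hirr (LinearMap.ker B) hU with h | h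
    · exfalso
      have hvmem : v ∈ LinearMap.ker B := by
        rw [LinearMap.mem_ker]
        simp [hB, Module.End.mul_apply, hAv, map_smul, smul_smul]
      rw [h] at hvmem
      exact hv (by simpa using hvmem)
    · intro u
      have hu : u ∈ LinearMap.ker B := h ▸ Submodule.mem_top
      rw [LinearMap.mem_ker] at hu
      have : (A * A) u - (c * c) • u = 0 := by
        simpa [hB, Module.End.mul_apply] using hu
      exact sub_eq_zero.mp this
end

section
/- Let g be a simplest Lie algebra (a simple Lie algebra all of whose proper subalgebras are abelian) over a field, and let x ∈ g be nonzero. Then the centralizer C_x = {y ∈ g : [x,y] = 0} is an abelian subalgebra, and it is self-normalizing: if y ∈ g satisfies [x,y] ∈ C_x, then y ∈ C_x. Consequently C_x is a Cartan subalgebra of g. -/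
/-- In a simplest Lie algebra (a simple Lie algebra all of whose proper
subalgebras are abelian) the centralizer of a nonzero element is abelian and
self-normalizing, hence a Cartan subalgebra. -/
theorem stmt15 {k L : Type*} [Field k] [LieRing L] [LieAlgebra k L]
    (hsimple : LieAlgebra.IsSimple k L)
    (hsimplest : ∀ K : LieSubalgebra k L, K ≠ ⊤ → ∀ x ∈ K, ∀ y ∈ K, ⁅x, y⁆ = 0)
    (x : L) (hx : x ≠ 0) :
    (∀ y z : L, ⁅x, y⁆ = 0 → ⁅x, z⁆ = 0 → ⁅y, z⁆ = 0) ∧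
    (∀ y : L, ⁅x, ⁅x, y⁆⁆ = 0 → ⁅x, y⁆ = 0) := by
  haveI := hsimple
  -- the centralizer of x as a Lie subalgebra
  set K : LieSubalgebra k L :=
    { carrier := {y | ⁅x, y⁆ = 0}
      add_mem' := fun {a b} ha hb => by simp only [Set.mem_setOf_eq] at *; rw [lie_add, ha, hb, add_zero]
      zero_mem' := by simp
      smul_mem' := fun c {a} ha => by simp only [Set.mem_setOf_eq] at *; rw [lie_smul, ha, smul_zero]
      lie_mem' := fun {a b} ha hb => by
        simp only [Set.mem_setOf_eq] at *
        rw [leibniz_lie, ha, hb, zero_lie, lie_zero, add_zero] } with hKdef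
  have hxK : x ∈ K := lie_self x
  have hKne : K ≠ ⊤ := by
    intro h
    apply hx
    have hc : x ∈ LieAlgebra.center k L := by
      intro m
      have : m ∈ K := h ▸ LieSubalgebra.mem_top m
      have hm : ⁅x, m⁆ = 0 := this
      rw [← lie_skew, hm, neg_zero]
    rw [LieAlgebra.center_eq_bot k L] at hc
    exact hc
  have hKab : ∀ a ∈ K, ∀ b ∈ K, ⁅a, b⁆ = 0 := hsimplest K hKne
  refine ⟨fun y z hy hz => hKab y hy z hz, fun y hy => ?_⟩
  -- y lies in the normalizer of K
  have hyN : y ∈ K.normalizer := by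
    rw [LieSubalgebra.mem_normalizer_iff]
    intro b hb
    show ⁅x, ⁅y, b⁆⁆ = 0
    rw [leibniz_lie]
    have h1 : ⁅x, y⁆ ∈ K := hy
    have h2 : ⁅⁅x, y⁆, b⁆ = 0 := hKab _ h1 b hb
    have h3 : ⁅x, b⁆ = 0 := hb
    rw [h2, h3, lie_zero, add_zero]
  have hxN : x ∈ K.normalizer := K.le_normalizer hxK
  have hNne : K.normalizer ≠ ⊤ := by
    intro h
    -- then K would be an ideal
    have hlie : ∀ (a : L) {b : L}, b ∈ (K : Submodule k L) → ⁅a, b⁆ ∈ (K : Submodule k L) := by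
      intro a b hb
      have : a ∈ K.normalizer := h ▸ LieSubalgebra.mem_top a
      exact (LieSubalgebra.mem_normalizer_iff K a).mp this b hb
    let I : LieIdeal k L := { (K : Submodule k L) with lie_mem := fun {a b} hb => hlie a hb }
    rcases hsimple.eq_bot_or_eq_top I with hb | ht
    · have : x ∈ I := hxK
      rw [hb] at this
      exact hx this
    · apply hKne
      ext m
      simp only [LieSubalgebra.mem_top, iff_true]
      have : m ∈ I := ht ▸ LieSubmodule.mem_top m
      exact this
  exact hsimplest K.normalizer hNne x hxN y hyN
end

section
/- Let g be a simplest Lie algebra (a simple Lie algebra all of whose proper subalgebras are abelian). Then: (1) if x, z ∈ g, y ∈ g with y ≠ 0, [x,y] = 0 and [z,y] = 0, then [x,z] = 0; and (2) for any nonzero x, y ∈ g, either C_x = C_y or C_x ∩ C_y = {0}, where C_x denotes the centralizer of x. -/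
/-- The centralizer of a single element as a Lie subalgebra. -/
def centAlg {k L : Type*} [Field k] [LieRing L] [LieAlgebra k L] (y : L) :
    LieSubalgebra k L where
  carrier := {x | ⁅x, y⁆ = 0}
  add_mem' := by intro a b ha hb; simp_all [add_lie]
  zero_mem' := by simp
  smul_mem' := by intro c a ha; simp_all [smul_lie]
  lie_mem' := by
    intro a b ha hb
    simp only [Set.mem_setOf_eq] at *
    rw [lie_lie, ha, hb]; simp

lemma centAlg_ne_top {k L : Type*} [Field k] [LieRing L] [LieAlgebra k L]
    (hsimple : LieAlgebra.IsSimple k L) {y : L} (hy : y ≠ 0) : centAlg (k := k) y ≠ ⊤ := by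
  intro h
  apply hy
  have hc : y ∈ LieAlgebra.center k L := by
    rw [LieModule.mem_maxTrivSubmodule]
    intro x
    have : x ∈ centAlg (k := k) y := h ▸ LieSubalgebra.mem_top x
    exact this
  rw [LieAlgebra.center_eq_bot] at hc
  exact hc

/-- In a simplest Lie algebra: commuting with a common nonzero element is
transitive, and centralizers of nonzero elements either coincide or intersect
trivially. -/
theorem stmt16 {k L : Type*} [Field k] [LieRing L] [LieAlgebra k L]
    (hsimple : LieAlgebra.IsSimple k L)
    (hsimplest : ∀ K : LieSubalgebra k L, K ≠ ⊤ → ∀ x ∈ K, ∀ y ∈ K, ⁅x, y⁆ = 0) :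
    (∀ x z y : L, y ≠ 0 → ⁅x, y⁆ = 0 → ⁅z, y⁆ = 0 → ⁅x, z⁆ = 0) ∧
    (∀ x y : L, x ≠ 0 → y ≠ 0 →
      (∀ z : L, ⁅x, z⁆ = 0 ↔ ⁅y, z⁆ = 0) ∨
      (∀ z : L, ⁅x, z⁆ = 0 → ⁅y, z⁆ = 0 → z = 0)) := by
  have h1 : ∀ x z y : L, y ≠ 0 → ⁅x, y⁆ = 0 → ⁅z, y⁆ = 0 → ⁅x, z⁆ = 0 := by
    intro x z y hy hx hz
    exact hsimplest (centAlg y) (centAlg_ne_top hsimple hy) x hx z hz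
  refine ⟨h1, ?_⟩
  intro x y hx hy
  by_cases h : ∃ w : L, w ≠ 0 ∧ ⁅x, w⁆ = 0 ∧ ⁅y, w⁆ = 0
  · obtain ⟨w, hw, hxw, hyw⟩ := h
    left
    intro z
    constructor
    · intro hz
      -- z, w both commute with x ≠ 0, so [z,w]=0; then z,y commute with w ≠ 0
      have hzw : ⁅z, w⁆ = 0 := by
        have hzx : ⁅z, x⁆ = 0 := by rw [← lie_skew, hz, neg_zero]
        have hwx : ⁅w, x⁆ = 0 := by rw [← lie_skew, hxw, neg_zero]
        exact h1 z w x hx hzx hwx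
      exact h1 y z w hw hyw hzw
    · intro hz
      have hzw : ⁅z, w⁆ = 0 := by
        have hzy : ⁅z, y⁆ = 0 := by rw [← lie_skew, hz, neg_zero]
        have hwy : ⁅w, y⁆ = 0 := by rw [← lie_skew, hyw, neg_zero]
        exact h1 z w y hy hzy hwy
      exact h1 x z w hw hxw hzw
  · right
    intro z hxz hyz
    by_contra hz
    exact h ⟨z, hz, hxz, hyz⟩
end
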